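/- Let F be a field and A an n×n matrix over F. Then A is similar over F to a diagonal matrix (i.e., there exist an invertible n×n matrix P and d : n → F with A = P · diagonal(d) · P⁻¹) if and only if there exist a natural number p, pairwise distinct nonzero elements λ_1,…,λ_p of F, and n×n matrices P_1,…,P_p over F such that A^k = ∑_{j=1}^{p} λ_j^k · P_j for every natural number k ≥ 1. -/

import Mathlib

open Finset Polynomial Module

-- kernel of product of distinct linear factors
lemma aux_ker_prod {K V : Type*} [Field K] [AddCommGroup V] [Module K V]
    (f : Module.End K V) {m : ℕ} (μ : Fin m → K) (hμ : Function.Injective μ)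
    (s : Finset (Fin m)) :
    LinearMap.ker (aeval f (∏ i ∈ s, (X - C (μ i)))) =
      ⨆ i ∈ s, LinearMap.ker (aeval f (X - C (μ i))) := by
  induction s using Finset.induction_on with
  | empty => simp [Module.End.one_eq_id]
  | insert a s ha ih =>
    have hcop : IsCoprime (X - C (μ a)) (∏ i ∈ s, (X - C (μ i))) := by
      refine IsCoprime.prod_right fun i hi => isCoprime_X_sub_C_of_isUnit_sub ?_
      refine (sub_ne_zero.mpr fun h => ha ?_).isUnit
      rwa [hμ h]
    rw [Finset.prod_insert ha, ← Polynomial.sup_ker_aeval_eq_ker_aeval_mul_of_coprime f hcop,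
      ih]
    rw [Finset.iSup_insert]

lemma aux_aeval_sum {F : Type*} [Field F] {n : Type*} [Fintype n] [DecidableEq n]
    (A : Matrix n n F) {p : ℕ} (lam : Fin p → F) (Pj : Fin p → Matrix n n F)
    (h : ∀ k : ℕ, 1 ≤ k → A ^ k = ∑ j : Fin p, lam j ^ k • Pj j)
    (s : F[X]) (hs : s.coeff 0 = 0) :
    aeval A s = ∑ j : Fin p, s.eval (lam j) • Pj j := by
  rw [Polynomial.aeval_eq_sum_range]
  have key : ∀ k ∈ Finset.range (s.natDegree + 1),
      s.coeff k • A ^ k = ∑ j : Fin p, (s.coeff k * lam j ^ k) • Pj j := by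
    intro k _
    rcases Nat.eq_zero_or_pos k with rfl | hk
    · simp [hs]
    · rw [h k hk, Finset.smul_sum]
      simp [smul_smul]
  rw [Finset.sum_congr rfl key, Finset.sum_comm]
  refine Finset.sum_congr rfl fun j _ => ?_
  rw [← Finset.sum_smul, Polynomial.eval_eq_sum_range]

lemma aux_backward {F : Type*} [Field F] {n : Type*} [Fintype n] [DecidableEq n] [Nonempty n]
    (A : Matrix n n F) {p : ℕ} (lam : Fin p → F) (Pj : Fin p → Matrix n n F)
    (hinj : Function.Injective lam) (hne : ∀ j, lam j ≠ 0)
    (h : ∀ k : ℕ, 1 ≤ k → A ^ k = ∑ j : Fin p, lam j ^ k • Pj j) :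
    ∃ P : Matrix n n F, IsUnit P ∧ ∃ d : n → F, A = P * Matrix.diagonal d * P⁻¹ := by
  classical
  set μ0 : Fin (p + 1) → F := Fin.cons 0 lam with hμ0def
  have hμ0 : Function.Injective μ0 := by
    rw [hμ0def, Fin.cons_injective_iff]
    exact ⟨by simpa using hne, hinj⟩
  set q : F[X] := ∏ i : Fin (p + 1), (X - C (μ0 i)) with hqdef
  have hq0 : q.coeff 0 = 0 := by
    rw [Polynomial.coeff_zero_eq_eval_zero, hqdef, Polynomial.eval_prod]
    refine Finset.prod_eq_zero (Finset.mem_univ 0) ?_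
    simp [μ0]
  have hqA : aeval A q = 0 := by
    rw [aux_aeval_sum A lam Pj h q hq0]
    refine Finset.sum_eq_zero fun j _ => ?_
    have hz : q.eval (lam j) = 0 := by
      rw [hqdef, Polynomial.eval_prod]
      refine Finset.prod_eq_zero (Finset.mem_univ j.succ) ?_
      simp [μ0]
    rw [hz, zero_smul]
  set f : Module.End F (n → F) := Matrix.toLin' A with hfdef
  let φ : Matrix n n F →ₐ[F] Module.End F (n → F) :=
    (Matrix.toLinAlgEquiv' : Matrix n n F ≃ₐ[F] Module.End F (n → F)).toAlgHom
  have hfalg : f = φ A := rfl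
  have hfq : aeval f q = 0 := by
    rw [hfalg, Polynomial.aeval_algHom_apply φ A q, hqA, map_zero]
  set W : Fin (p + 1) → Submodule F (n → F) := fun i => f.eigenspace (μ0 i) with hWdef
  have hWker : ∀ i, LinearMap.ker (aeval f (X - C (μ0 i))) = W i := by
    intro i
    ext x
    simp [hWdef, Module.End.mem_eigenspace_iff, sub_eq_zero, Module.algebraMap_end_apply,
      LinearMap.sub_apply]
  have htop : ⨆ i, W i = ⊤ := by
    have h2 := aux_ker_prod f μ0 hμ0 Finset.univ
    rw [← hqdef, hfq] at h2
    simp only [LinearMap.ker_zero, Finset.mem_univ, iSup_pos, hWker] at h2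
    simpa using h2.symm
  have hindep : iSupIndep W := f.eigenspaces_iSupIndep.comp hμ0
  have hInt : DirectSum.IsInternal W :=
    DirectSum.isInternal_submodule_of_iSupIndep_of_iSup_eq_top hindep htop
  let bb := fun i => Module.Free.chooseBasis F (W i)
  let b := hInt.collectedBasis bb
  let e := b.indexEquiv (Pi.basisFun F n)
  let b' := b.reindex e
  let d : n → F := fun i => μ0 (e.symm i).1
  have hb' : ∀ i, f (b' i) = d i • b' i := by
    intro i
    have hmem : b (e.symm i) ∈ W (e.symm i).1 := hInt.collectedBasis_mem bb (e.symm i)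
    rw [Basis.reindex_apply]
    exact Module.End.mem_eigenspace_iff.mp hmem
  have htm : LinearMap.toMatrix b' b' f = Matrix.diagonal d := by
    ext i j
    rw [LinearMap.toMatrix_apply, hb' j, map_smul, Basis.repr_self]
    by_cases hij : i = j
    · subst hij; simp
    · simp [Matrix.diagonal_apply_ne _ hij, Finsupp.single_apply, Ne.symm hij]
  have key := basis_toMatrix_mul_linearMap_toMatrix_mul_basis_toMatrix
    (Pi.basisFun F n) b' (Pi.basisFun F n) b' f
  rw [htm, LinearMap.toMatrix_eq_toMatrix', hfdef, LinearMap.toMatrix'_toLin'] at key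
  set P : Matrix n n F := (Pi.basisFun F n).toMatrix b' with hPdef
  have hP1 : P * b'.toMatrix (Pi.basisFun F n) = 1 := Basis.toMatrix_mul_toMatrix_flip _ _
  have hPinv : P⁻¹ = b'.toMatrix (Pi.basisFun F n) := Matrix.inv_eq_right_inv hP1
  exact ⟨P, (Matrix.isUnit_iff_isUnit_det P).mpr (Matrix.isUnit_det_of_right_inverse hP1), d, by rw [hPinv, key]⟩

lemma aux_forward {F : Type*} [Field F] {n : Type*} [Fintype n] [DecidableEq n] [Nonempty n]
    (A : Matrix n n F) (P : Matrix n n F) (hP : IsUnit P) (d : n → F)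
    (hA : A = P * Matrix.diagonal d * P⁻¹) :
    ∃ (p : ℕ) (lam : Fin p → F) (Pj : Fin p → Matrix n n F),
      Function.Injective lam ∧ (∀ j, lam j ≠ 0) ∧
      ∀ k : ℕ, 1 ≤ k → A ^ k = ∑ j : Fin p, lam j ^ k • Pj j := by
  classical
  have hdet := (Matrix.isUnit_iff_isUnit_det P).mp hP
  have h1 : P * P⁻¹ = 1 := Matrix.mul_nonsing_inv P hdet
  have h2 : P⁻¹ * P = 1 := Matrix.nonsing_inv_mul P hdet
  have hpow : ∀ k : ℕ, A ^ k = P * (Matrix.diagonal d) ^ k * P⁻¹ := by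
    intro k
    induction k with
    | zero => simp [h1]
    | succ k ih =>
      rw [pow_succ, ih, hA, pow_succ]
      simp only [Matrix.mul_assoc]
      rw [← Matrix.mul_assoc P⁻¹ P (Matrix.diagonal d * P⁻¹), h2, Matrix.one_mul]
  set t : Finset F := (Finset.image d Finset.univ).erase 0 with htdef
  set lam : Fin t.card → F := fun j => ((t.equivFin.symm j : t) : F) with hlamdef
  have hlaminj : Function.Injective lam := fun a b hab =>
    t.equivFin.symm.injective (Subtype.coe_injective hab)
  have hlamne : ∀ j, lam j ≠ 0 := fun j =>
    (Finset.mem_erase.mp (t.equivFin.symm j).2).1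
  refine ⟨t.card, lam, fun j =>
    P * Matrix.diagonal (fun i => if d i = lam j then (1 : F) else 0) * P⁻¹,
    hlaminj, hlamne, fun k hk => ?_⟩
  have hentry : ∀ i, d i ^ k = ∑ j, lam j ^ k * (if d i = lam j then (1 : F) else 0) := by
    intro i
    by_cases h0 : d i = 0
    · rw [h0, zero_pow (by omega)]
      symm
      refine Finset.sum_eq_zero fun j _ => ?_
      rw [if_neg, mul_zero]
      exact fun hh => hlamne j hh.symm
    · have hmem : d i ∈ t := Finset.mem_erase.mpr
        ⟨h0, Finset.mem_image_of_mem d (Finset.mem_univ i)⟩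
      set j₀ := t.equivFin ⟨d i, hmem⟩ with hj₀def
      have hj₀ : lam j₀ = d i := by simp [hlamdef, hj₀def]
      rw [Finset.sum_eq_single j₀]
      · rw [if_pos hj₀.symm, mul_one, hj₀]
      · intro j _ hjne
        rw [if_neg, mul_zero]
        intro hh
        exact hjne (hlaminj (hj₀.trans hh)).symm
      · exact fun habs => absurd (Finset.mem_univ j₀) habs
  have hdiag : Matrix.diagonal (d ^ k) =
      ∑ j, lam j ^ k • Matrix.diagonal (fun i => if d i = lam j then (1 : F) else 0) := by
    ext a b
    rw [Matrix.sum_apply]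
    by_cases hab : a = b
    · subst hab
      simp only [Matrix.smul_apply, Matrix.diagonal_apply_eq, Pi.pow_apply, smul_eq_mul]
      exact hentry a
    · simp [Matrix.diagonal_apply_ne _ hab]
  rw [hpow k, Matrix.diagonal_pow, hdiag, Finset.mul_sum, Finset.sum_mul]
  refine Finset.sum_congr rfl fun j _ => ?_
  rw [Matrix.mul_smul, Matrix.smul_mul]

/-- A matrix `A` is similar over `F` to a diagonal matrix iff there are finitely many pairwise
distinct nonzero scalars `λ_j` and matrices `P_j` with `A^k = ∑_j λ_j^k • P_j` for all `k ≥ 1`. -/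
theorem diagonalizable_iff_purely_geometric_constant_coefficients
    (F : Type*) [Field F] (n : Type*) [Fintype n] [DecidableEq n] [Nonempty n]
    (A : Matrix n n F) :
    (∃ P : Matrix n n F, IsUnit P ∧ ∃ d : n → F, A = P * Matrix.diagonal d * P⁻¹) ↔
    (∃ (p : ℕ) (lam : Fin p → F) (Pj : Fin p → Matrix n n F),
      Function.Injective lam ∧ (∀ j, lam j ≠ 0) ∧
      ∀ k : ℕ, 1 ≤ k → A ^ k = ∑ j : Fin p, lam j ^ k • Pj j) := by
  constructor
  · rintro ⟨P, hP, d, hA⟩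
    exact aux_forward A P hP d hA
  · rintro ⟨p, lam, Pj, hinj, hne, h⟩
    exact aux_backward A lam Pj hinj hne h
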